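/- Lower bound on the smoothed class probability at a perturbed input (case ψ ≥ ψ̃): Let x, x̃ ∈ X, let z★ be a longest common subsequence of x and x̃ with L := |z★|, let ψ, ψ̃ ∈ (0,1) with ψ ≥ ψ̃, let f̄ : X → Y be any base classifier and y ∈ Y. Set μ := p_y(x; f̄, ψ) and W := μ − 1 + ψ^{|x|−L}, and let H★ := min{ h ∈ {0,…,L} : Σ_{i=0}^{h} B(L, ψ, i) ≥ W } (this set is nonempty since Σ_{i=0}^{L} B(L, ψ, i) = 1 ≥ W). Then p_y(x̃; f̄, ψ̃) ≥ (ψ̃^{|x̃|−L} / ψ^{|x|−L}) · ( Σ_{i=0}^{H★−1} B(L, ψ̃, i) + B(L, ψ̃, H★) · ⌊ (W − Σ_{j=0}^{H★−1} B(L, ψ, j)) / B(L, ψ, H★) ⌋_{C(L,H★)^{−1}} ). -/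

import Mathlib

/-- Apply a deletion indicator: keep the tokens at positions `i` with `ε i = true`, in order. -/
def applyDel {Ω : Type*} (x : List Ω) (ε : Fin x.length → Bool) : List Ω :=
  (List.finRange x.length).filterMap fun i => if ε i then some (x.get i) else none

/-- Number of retained tokens `|ε|`. -/
def retained {n : ℕ} (ε : Fin n → Bool) : ℕ :=
  (Finset.univ.filter fun i => ε i = true).card

/-- `q_ψ(ε|x) = ψ^{|x|-|ε|} (1-ψ)^{|ε|}`. -/
noncomputable def qdel {Ω : Type*} (ψ : ℝ) (x : List Ω) (ε : Fin x.length → Bool) : ℝ :=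
  ψ ^ (x.length - retained ε) * (1 - ψ) ^ (retained ε)

/-- The score `s_{f̄,ψ}(ε, x) = q_ψ(ε|x)·1[f̄(apply(x,ε)) = y]`. -/
noncomputable def score {Ω Y : Type*} [DecidableEq Y] (f : List Ω → Y) (y : Y) (ψ : ℝ)
    (x : List Ω) (ε : Fin x.length → Bool) : ℝ :=
  qdel ψ x ε * (if f (applyDel x ε) = y then 1 else 0)

/-- The smoothed class probability `p_y(x; f̄, ψ) = Σ_{ε ∈ E(x)} s_{f̄,ψ}(ε, x)`. -/
noncomputable def smoothedProb {Ω Y : Type*} [DecidableEq Y] (f : List Ω → Y) (y : Y)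
    (ψ : ℝ) (x : List Ω) : ℝ :=
  ∑ ε : Fin x.length → Bool, score f y ψ x ε

/-- `z` is a longest common subsequence of `x` and `x̃`. -/
def IsLCS {Ω : Type*} (z x xt : List Ω) : Prop :=
  z.Sublist x ∧ z.Sublist xt ∧ ∀ w : List Ω, w.Sublist x → w.Sublist xt → w.length ≤ z.length

/-- The binomial pmf `B(n, p, k) = C(n,k)·(1−p)^k·p^{n−k}`. -/
noncomputable def binomPMF (n : ℕ) (p : ℝ) (k : ℕ) : ℝ :=
  (n.choose k : ℝ) * (1 - p) ^ k * p ^ (n - k)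

/-- Gridded floor `⌊a⌋_v = v·⌊a/v⌋`. -/
noncomputable def gfloor (a v : ℝ) : ℝ := v * (⌊a / v⌋ : ℤ)

/-- Gridded ceiling `⌈a⌉_v = v·⌈a/v⌉`. -/
noncomputable def gceil (a v : ℝ) : ℝ := v * (⌈a / v⌉ : ℤ)

open Finset

/-! ### Auxiliary lemmas -/

lemma retained_eq_sum {n : ℕ} (ε : Fin n → Bool) :
    retained ε = ∑ i, (if ε i then 1 else 0) := by
  unfold retained
  rw [Finset.card_filter]

lemma retained_le {n : ℕ} (ε : Fin n → Bool) : retained ε ≤ n := by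
  simpa [retained] using Finset.card_filter_le Finset.univ fun i => ε i = true

lemma retained_cons {n : ℕ} (b : Bool) (ε : Fin n → Bool) :
    retained (Fin.cons b ε) = (if b then 1 else 0) + retained ε := by
  rw [retained_eq_sum, retained_eq_sum, Fin.sum_univ_succ, Fin.cons_zero]
  simp only [Fin.cons_succ]

lemma applyDel_cons {Ω : Type*} (a : Ω) (x : List Ω) (b : Bool) (ε : Fin x.length → Bool) :
    applyDel (a :: x) (Fin.cons b ε) = (if b then [a] else []) ++ applyDel x ε := by
  cases b <;>
  simp [applyDel, List.finRange_succ, List.filterMap_cons, List.filterMap_map,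
    Function.comp_def]

lemma exists_maskEmbed {Ω : Type*} {z x : List Ω} (h : z.Sublist x) :
    ∃ Φ : (Fin z.length → Bool) → (Fin x.length → Bool),
      Function.Injective Φ ∧
      (∀ T, retained (Φ T) = retained T) ∧
      (∀ T, applyDel x (Φ T) = applyDel z T) := by
  induction h with
  | slnil => exact ⟨id, Function.injective_id, fun T => rfl, fun T => rfl⟩
  | @cons l₁ l₂ a h IH =>
      obtain ⟨Φ, hinj, hret, happ⟩ := IH
      refine ⟨fun T => Fin.cons false (Φ T), ?_, ?_, ?_⟩
      · intro T T' hTT'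
        apply hinj
        funext i
        simpa [Fin.cons_succ] using congrFun hTT' i.succ
      · intro T; rw [retained_cons]; simp [hret]
      · intro T; rw [applyDel_cons]; simp [happ]
  | @cons_cons l₁ l₂ a h IH =>
      obtain ⟨Φ, hinj, hret, happ⟩ := IH
      refine ⟨fun T : Fin (l₁.length + 1) → Bool => Fin.cons (T 0) (Φ (Fin.tail T)), ?_, ?_, ?_⟩
      · intro T T' hTT'
        have h0 : T (0 : Fin (l₁.length + 1)) = T' (0 : Fin (l₁.length + 1)) := by
          simpa using congrFun hTT' (0 : Fin (l₂.length + 1))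
        have htl : Fin.tail T = Fin.tail T' := by
          apply hinj
          funext i
          simpa [Fin.cons_succ] using congrFun hTT' i.succ
        funext i
        refine Fin.cases ?_ ?_ i
        · exact h0
        · intro j; exact congrFun htl j
      · intro T
        rw [retained_cons, hret]
        conv_rhs => rw [← Fin.cons_self_tail T, retained_cons]
      · intro T
        rw [applyDel_cons, happ]
        conv_rhs => rw [← Fin.cons_self_tail T]
        rw [applyDel_cons]

lemma sum_mask (ψ : ℝ) (n : ℕ) :
    ∑ ε : Fin n → Bool, ψ ^ (n - retained ε) * (1 - ψ) ^ (retained ε) = 1 := by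
  have h1 : ∀ ε : Fin n → Bool,
      ψ ^ (n - retained ε) * (1 - ψ) ^ (retained ε)
        = ∏ i, (if ε i then (1 - ψ) else ψ) := by
    intro ε
    rw [Finset.prod_ite (fun _ => (1:ℝ) - ψ) (fun _ => ψ), Finset.prod_const, Finset.prod_const]
    have hc := Finset.card_filter_add_card_filter_not
      (s := (Finset.univ : Finset (Fin n))) (p := fun i => ε i = true)
    have hcard : (Finset.univ.filter fun i => ¬ ε i = true).card = n - retained ε := by
      simp only [Finset.card_univ, Fintype.card_fin] at hc
      unfold retained
      omega
    rw [hcard]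
    unfold retained
    exact (mul_comm _ _)
  rw [Finset.sum_congr rfl fun ε _ => h1 ε,
    ← Fintype.prod_sum (fun (_ : Fin n) (b : Bool) => if b then (1-ψ) else ψ)]
  simp

lemma count_le (L k : ℕ) (P : (Fin L → Bool) → Prop) [DecidablePred P] :
    ((Finset.univ.filter fun T : Fin L → Bool => retained T = k ∧ P T)).card ≤ L.choose k := by
  classical
  have h := Finset.card_le_card_of_injOn
    (f := fun T : Fin L → Bool => Finset.univ.filter fun i => T i = true)
    (s := (Finset.univ.filter fun T : Fin L → Bool => retained T = k ∧ P T))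
    (t := Finset.powersetCard k Finset.univ) ?_ ?_
  · simpa [Finset.card_powersetCard] using h
  · intro T hT
    rw [Finset.mem_coe, Finset.mem_filter] at hT
    rw [Finset.mem_coe, Finset.mem_powersetCard]
    exact ⟨Finset.subset_univ _, hT.2.1⟩
  · intro T hT T' hT' hEq
    funext i
    have := Finset.ext_iff.mp hEq i
    simp only [Finset.mem_filter, Finset.mem_univ, true_and] at this
    by_cases h1 : T i = true
    · rw [h1, eq_comm, ← this]; exact h1
    · have h2 : T i = false := by simpa using h1
      have h3 : ¬ T' i = true := fun hh => h1 (this.mpr hh)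
      rw [h2, eq_comm]; simpa using h3

lemma group_sum {L : ℕ} (Q : (Fin L → Bool) → Prop) [DecidablePred Q] (g : ℕ → ℝ) :
    ∑ T : Fin L → Bool, g (retained T) * (if Q T then (1:ℝ) else 0)
      = ∑ k ∈ Finset.range (L + 1),
          (((Finset.univ.filter fun T : Fin L → Bool => retained T = k ∧ Q T)).card : ℝ) * g k := by
  classical
  rw [← Finset.sum_fiberwise_of_maps_to (g := fun T : Fin L → Bool => retained T)
      (t := Finset.range (L+1)) (fun T _ => Finset.mem_range.mpr (Nat.lt_succ_of_le (by
        simpa [retained] using Finset.card_filter_le Finset.univ fun i => T i = true)))]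
  refine Finset.sum_congr rfl fun k _ => ?_
  have : ∀ T ∈ Finset.univ.filter fun T : Fin L → Bool => retained T = k,
      g (retained T) * (if Q T then (1:ℝ) else 0) = if Q T then g k else 0 := by
    intro T hT
    rw [Finset.mem_filter] at hT
    rw [hT.2]
    by_cases h : Q T <;> simp [h]
  rw [Finset.sum_congr rfl this, Finset.sum_ite, Finset.sum_const, Finset.sum_const,
    Finset.filter_filter]
  simp [mul_comm]

lemma gfloor_le {a v : ℝ} (hv : 0 < v) : gfloor a v ≤ a := by
  unfold gfloor
  calc v * (⌊a / v⌋ : ℤ) ≤ v * (a / v) := mul_le_mul_of_nonneg_left (Int.floor_le _) hv.le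
    _ = a := by field_simp

lemma binomPMF_pos {L k : ℕ} (hk : k ≤ L) {ψ : ℝ} (hψ : ψ ∈ Set.Ioo (0:ℝ) 1) :
    0 < binomPMF L ψ k := by
  unfold binomPMF
  obtain ⟨h1, h2⟩ := hψ
  have hc : (0:ℝ) < (L.choose k : ℝ) := by exact_mod_cast Nat.choose_pos hk
  have : (0:ℝ) < 1 - ψ := by linarith
  positivity

lemma binomPMF_nonneg {L k : ℕ} {ψ : ℝ} (hψ : ψ ∈ Set.Ioo (0:ℝ) 1) :
    0 ≤ binomPMF L ψ k := by
  unfold binomPMF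
  obtain ⟨h1, h2⟩ := hψ
  have : (0:ℝ) < 1 - ψ := by linarith
  positivity

lemma binom_sum_one (L : ℕ) (ψ : ℝ) :
    ∑ i ∈ Finset.range (L + 1), binomPMF L ψ i = 1 := by
  have h := add_pow (1 - ψ) ψ L
  have h2 : ∀ i ∈ Finset.range (L+1),
      binomPMF L ψ i = (1-ψ)^i * ψ^(L-i) * (L.choose i : ℝ) := by
    intro i _
    unfold binomPMF
    ring
  rw [Finset.sum_congr rfl h2, ← h]
  norm_num

lemma ratio_mono {ψ ψt : ℝ} (hψ : ψ ∈ Set.Ioo (0:ℝ) 1) (hψt : ψt ∈ Set.Ioo (0:ℝ) 1)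
    (hge : ψt ≤ ψ) {L k h : ℕ} (hkh : k ≤ h) (hhL : h ≤ L) :
    binomPMF L ψt k * binomPMF L ψ h ≤ binomPMF L ψt h * binomPMF L ψ k := by
  obtain ⟨d, rfl⟩ : ∃ d, h = k + d := ⟨h - k, by omega⟩
  obtain ⟨hψ1, hψ2⟩ := hψ
  obtain ⟨hψt1, hψt2⟩ := hψt
  have e1 : L - k = (L - (k + d)) + d := by omega
  unfold binomPMF
  rw [e1, pow_add, pow_add, pow_add, pow_add]
  have key : ψt ^ d * (1 - ψ) ^ d ≤ (1 - ψt) ^ d * ψ ^ d := by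
    rw [← mul_pow, ← mul_pow]
    apply pow_le_pow_left₀ (by nlinarith) (by nlinarith)
  have P0 : (0:ℝ) ≤ (L.choose k : ℝ) * (L.choose (k+d) : ℝ) * (1 - ψt) ^ k *
      ψt ^ (L - (k + d)) * (1 - ψ) ^ k * ψ ^ (L - (k + d)) := by
    have : (0:ℝ) < 1 - ψ := by linarith
    have : (0:ℝ) < 1 - ψt := by linarith
    positivity
  nlinarith [mul_le_mul_of_nonneg_left key P0]

lemma lemD (L H : ℕ) (hHL : H ≤ L) (ψ ψt : ℝ) (hψ : ψ ∈ Set.Ioo (0:ℝ) 1)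
    (hψt : ψt ∈ Set.Ioo (0:ℝ) 1) (hge : ψt ≤ ψ) (τ : ℕ → ℝ)
    (hτ0 : ∀ k, 0 ≤ τ k) (hτ1 : ∀ k, τ k ≤ 1) (W : ℝ)
    (hWτ : W ≤ ∑ k ∈ range (L+1), τ k * binomPMF L ψ k) :
    ∑ k ∈ range (L+1), τ k * binomPMF L ψt k ≥
      ∑ i ∈ range H, binomPMF L ψt i +
        binomPMF L ψt H * gfloor ((W - ∑ j ∈ range H, binomPMF L ψ j) / binomPMF L ψ H)
          ((L.choose H : ℝ)⁻¹) := by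
  set g : ℝ := gfloor ((W - ∑ j ∈ range H, binomPMF L ψ j) / binomPMF L ψ H)
      ((L.choose H : ℝ)⁻¹) with hg
  set σ : ℕ → ℝ := fun k => if k < H then 1 else if k = H then g else 0 with hσ
  have hsplit : ∀ B : ℕ → ℝ, ∑ k ∈ range (L+1), σ k * B k
      = ∑ i ∈ range H, B i + g * B H := by
    intro B
    have h1 : range (L+1) = range H ∪ Ico H (L+1) := by
      rw [range_eq_Ico, range_eq_Ico]
      exact (Finset.Ico_union_Ico_eq_Ico (a := 0) (b := H) (c := L+1) (by omega) (by omega)).symm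
    have hdisj : Disjoint (range H) (Ico H (L+1)) := by
      rw [range_eq_Ico]
      exact Finset.Ico_disjoint_Ico_consecutive 0 H (L+1)
    rw [h1, Finset.sum_union hdisj]
    congr 1
    · refine Finset.sum_congr rfl fun k hk => ?_
      rw [Finset.mem_range] at hk
      simp [hσ, hk]
    · rw [Finset.sum_eq_single_of_mem H (by rw [Finset.mem_Ico]; omega)]
      · simp [hσ, mul_comm]
      · intro k hk hkH
        rw [Finset.mem_Ico] at hk
        have : ¬ k < H := by omega
        simp [hσ, this, hkH]
  have hBH : 0 < binomPMF L ψ H := binomPMF_pos hHL hψ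
  have hBtH : 0 ≤ binomPMF L ψt H := binomPMF_nonneg hψt
  have hchoose : (0:ℝ) < ((L.choose H : ℝ))⁻¹ := by
    have : (0:ℝ) < (L.choose H : ℝ) := by exact_mod_cast Nat.choose_pos hHL
    positivity
  have hgW : g * binomPMF L ψ H ≤ W - ∑ j ∈ range H, binomPMF L ψ j := by
    have := gfloor_le (a := (W - ∑ j ∈ range H, binomPMF L ψ j) / binomPMF L ψ H) hchoose
    rw [← hg] at this
    calc g * binomPMF L ψ H
        ≤ ((W - ∑ j ∈ range H, binomPMF L ψ j) / binomPMF L ψ H) * binomPMF L ψ H :=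
          mul_le_mul_of_nonneg_right this hBH.le
      _ = _ := by field_simp
  have hσW : ∑ k ∈ range (L+1), σ k * binomPMF L ψ k ≤ W := by
    rw [hsplit]
    linarith
  have hterm : ∀ k ∈ range (L+1), 0 ≤ (τ k - σ k) *
      (binomPMF L ψt k * binomPMF L ψ H - binomPMF L ψt H * binomPMF L ψ k) := by
    intro k hk
    rw [Finset.mem_range] at hk
    rcases lt_trichotomy k H with hlt | heq | hgt
    · have hσk : σ k = 1 := by simp [hσ, hlt]
      have h2 : binomPMF L ψt k * binomPMF L ψ H ≤ binomPMF L ψt H * binomPMF L ψ k :=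
        ratio_mono hψ hψt hge hlt.le hHL
      have h1 : τ k - σ k ≤ 0 := by rw [hσk]; linarith [hτ1 k]
      nlinarith [mul_nonneg (neg_nonneg.2 h1) (neg_nonneg.2 (sub_nonpos.2 h2))]
    · subst heq
      simp [mul_comm]
    · have hσk : σ k = 0 := by
        have h1 : ¬ k < H := by omega
        have h2 : k ≠ H := by omega
        simp [hσ, h1, h2]
      have h2 : binomPMF L ψt H * binomPMF L ψ k ≤ binomPMF L ψt k * binomPMF L ψ H :=
        ratio_mono hψ hψt hge hgt.le (by omega)
      have h1 : 0 ≤ τ k - σ k := by rw [hσk]; linarith [hτ0 k]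
      exact mul_nonneg h1 (by linarith)
  have hsum := Finset.sum_nonneg hterm
  have hexp : ∑ k ∈ range (L+1), (τ k - σ k) *
      (binomPMF L ψt k * binomPMF L ψ H - binomPMF L ψt H * binomPMF L ψ k)
      = binomPMF L ψ H * (∑ k ∈ range (L+1), τ k * binomPMF L ψt k
          - ∑ k ∈ range (L+1), σ k * binomPMF L ψt k)
        - binomPMF L ψt H * (∑ k ∈ range (L+1), τ k * binomPMF L ψ k
          - ∑ k ∈ range (L+1), σ k * binomPMF L ψ k) := by
    rw [← Finset.sum_sub_distrib, ← Finset.sum_sub_distrib, Finset.mul_sum, Finset.mul_sum,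
      ← Finset.sum_sub_distrib]
    exact Finset.sum_congr rfl fun k _ => by ring
  rw [hexp] at hsum
  have h2 : 0 ≤ binomPMF L ψt H * (∑ k ∈ range (L+1), τ k * binomPMF L ψ k
      - ∑ k ∈ range (L+1), σ k * binomPMF L ψ k) := mul_nonneg hBtH (by linarith)
  have h3 : 0 ≤ binomPMF L ψ H * (∑ k ∈ range (L+1), τ k * binomPMF L ψt k
      - ∑ k ∈ range (L+1), σ k * binomPMF L ψt k) := by linarith
  have h4 : 0 ≤ ∑ k ∈ range (L+1), τ k * binomPMF L ψt k
      - ∑ k ∈ range (L+1), σ k * binomPMF L ψt k := nonneg_of_mul_nonneg_right h3 hBH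
  have h5 := hsplit (fun k => binomPMF L ψt k)
  rw [ge_iff_le]
  rw [h5] at h4
  linarith

/-- lower bound on the smoothed class probability at a perturbed input,
case `ψ ≥ ψ̃`. -/
theorem stmt11 {Ω Y : Type*} [DecidableEq Y] (x xt zs : List Ω)
    (hz : IsLCS zs x xt) (L : ℕ) (hL : L = zs.length)
    (ψ ψt : ℝ) (hψ : ψ ∈ Set.Ioo (0 : ℝ) 1) (hψt : ψt ∈ Set.Ioo (0 : ℝ) 1)
    (hge : ψ ≥ ψt)
    (f : List Ω → Y) (y : Y)
    (μ W : ℝ) (hμ : μ = smoothedProb f y ψ x)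
    (hW : W = μ - 1 + ψ ^ (x.length - L))
    (H : ℕ)
    (hH : H = sInf {h | h ≤ L ∧ W ≤ ∑ i ∈ Finset.range (h + 1), binomPMF L ψ i}) :
    smoothedProb f y ψt xt ≥
      ψt ^ (xt.length - L) / ψ ^ (x.length - L) *
        (∑ i ∈ Finset.range H, binomPMF L ψt i +
          binomPMF L ψt H *
            gfloor ((W - ∑ j ∈ Finset.range H, binomPMF L ψ j) / binomPMF L ψ H)
              ((L.choose H : ℝ)⁻¹)) := by
  classical
  obtain ⟨hzx, hzxt, -⟩ := hz
  subst hL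
  set m := zs.length with hm
  obtain ⟨hψ1, hψ2⟩ := hψ
  obtain ⟨hψt1, hψt2⟩ := hψt
  have hψmem : ψ ∈ Set.Ioo (0:ℝ) 1 := ⟨hψ1, hψ2⟩
  have hψtmem : ψt ∈ Set.Ioo (0:ℝ) 1 := ⟨hψt1, hψt2⟩
  obtain ⟨Φx, hinjx, hretx, happx⟩ := exists_maskEmbed hzx
  obtain ⟨Φt, hinjt, hrett, happt⟩ := exists_maskEmbed hzxt
  have hmn : m ≤ x.length := hzx.length_le
  have hmt : m ≤ xt.length := hzxt.length_le
  set a : ℕ → ℕ := fun k =>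
    ((Finset.univ.filter fun T : Fin m → Bool =>
      retained T = k ∧ f (applyDel zs T) = y)).card with ha
  -- score basics
  have hqnn : ∀ {w : List Ω} (p : ℝ), p ∈ Set.Ioo (0:ℝ) 1 → ∀ ε : Fin w.length → Bool,
      0 ≤ qdel p w ε := by
    intro w p hp ε
    unfold qdel
    obtain ⟨hp1, hp2⟩ := hp
    have : (0:ℝ) < 1 - p := by linarith
    positivity
  have hscore_le : ∀ {w : List Ω} (p : ℝ), p ∈ Set.Ioo (0:ℝ) 1 → ∀ ε : Fin w.length → Bool,
      score f y p w ε ≤ qdel p w ε := by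
    intro w p hp ε
    unfold score
    have h0 : (if f (applyDel w ε) = y then (1:ℝ) else 0) ≤ 1 := by
      split <;> norm_num
    calc qdel p w ε * (if f (applyDel w ε) = y then (1:ℝ) else 0)
        ≤ qdel p w ε * 1 := mul_le_mul_of_nonneg_left h0 (hqnn p hp ε)
      _ = qdel p w ε := mul_one _
  have hscore_nn : ∀ {w : List Ω} (p : ℝ), p ∈ Set.Ioo (0:ℝ) 1 → ∀ ε : Fin w.length → Bool,
      0 ≤ score f y p w ε := by
    intro w p hp ε
    unfold score
    apply mul_nonneg (hqnn p hp ε)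
    split <;> norm_num
  -- total qdel mass is 1
  have hqdel_one : ∀ {w : List Ω} (p : ℝ), ∑ ε : Fin w.length → Bool, qdel p w ε = 1 := by
    intro w p
    simpa [qdel] using sum_mask p w.length
  -- qdel at embedded masks
  have hqdel_img : ∀ T : Fin m → Bool,
      qdel ψ x (Φx T) = ψ ^ (x.length - retained T) * (1 - ψ) ^ (retained T) := by
    intro T
    unfold qdel
    rw [hretx]
  have himg_qdel : ∑ T : Fin m → Bool, qdel ψ x (Φx T) = ψ ^ (x.length - m) := by
    have h1 : ∀ T : Fin m → Bool, qdel ψ x (Φx T)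
        = ψ ^ (x.length - m) * (ψ ^ (m - retained T) * (1 - ψ) ^ (retained T)) := by
      intro T
      rw [hqdel_img T]
      have hr : retained T ≤ m := retained_le T
      rw [show x.length - retained T = (x.length - m) + (m - retained T) by omega, pow_add,
        mul_assoc]
    rw [Finset.sum_congr rfl fun T _ => h1 T, ← Finset.mul_sum, sum_mask ψ m, mul_one]
  -- score at embedded masks
  have hscore_img : ∀ T : Fin m → Bool,
      score f y ψ x (Φx T)
        = (ψ ^ (x.length - retained T) * (1 - ψ) ^ (retained T)) *
            (if f (applyDel zs T) = y then (1:ℝ) else 0) := by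
    intro T
    unfold score
    rw [hqdel_img T, happx T]
  have hscore_imgt : ∀ T : Fin m → Bool,
      score f y ψt xt (Φt T)
        = (ψt ^ (xt.length - retained T) * (1 - ψt) ^ (retained T)) *
            (if f (applyDel zs T) = y then (1:ℝ) else 0) := by
    intro T
    unfold score qdel
    rw [hrett T, happt T]
  -- grouped sums
  have hgroupx : ∑ T : Fin m → Bool, score f y ψ x (Φx T)
      = ∑ k ∈ Finset.range (m+1), (a k : ℝ) * (ψ ^ (x.length - k) * (1 - ψ) ^ k) := by
    rw [Finset.sum_congr rfl fun T _ => hscore_img T]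
    exact group_sum (fun T : Fin m → Bool => f (applyDel zs T) = y)
      (fun k => ψ ^ (x.length - k) * (1 - ψ) ^ k)
  have hgroupt : ∑ T : Fin m → Bool, score f y ψt xt (Φt T)
      = ∑ k ∈ Finset.range (m+1), (a k : ℝ) * (ψt ^ (xt.length - k) * (1 - ψt) ^ k) := by
    rw [Finset.sum_congr rfl fun T _ => hscore_imgt T]
    exact group_sum (fun T : Fin m → Bool => f (applyDel zs T) = y)
      (fun k => ψt ^ (xt.length - k) * (1 - ψt) ^ k)
  -- lower bound for xt
  have hxt : ∑ k ∈ Finset.range (m+1), (a k : ℝ) * (ψt ^ (xt.length - k) * (1 - ψt) ^ k)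
      ≤ smoothedProb f y ψt xt := by
    have himg_t : ∑ ε ∈ Finset.univ.image Φt, score f y ψt xt ε
        = ∑ T : Fin m → Bool, score f y ψt xt (Φt T) :=
      Finset.sum_image (fun T _ T' _ hTT' => hinjt hTT')
    rw [← hgroupt, smoothedProb, ← himg_t]
    exact Finset.sum_le_sum_of_subset_of_nonneg (Finset.subset_univ _)
      (fun ε _ _ => hscore_nn ψt hψtmem ε)
  -- upper bound for x : W ≤ grouped sum
  have hsum_sdiff := Finset.sum_sdiff (f := fun ε => score f y ψ x ε)
    (Finset.subset_univ (Finset.univ.image Φx))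
  have himg_score : ∑ ε ∈ Finset.univ.image Φx, score f y ψ x ε
      = ∑ T : Fin m → Bool, score f y ψ x (Φx T) :=
    Finset.sum_image (fun T _ T' _ hTT' => hinjx hTT')
  have himg_qdel' : ∑ ε ∈ Finset.univ.image Φx, qdel ψ x ε
      = ψ ^ (x.length - m) := by
    rw [Finset.sum_image (fun T _ T' _ hTT' => hinjx hTT')]
    exact himg_qdel
  have hcompl : ∑ ε ∈ (Finset.univ \ Finset.univ.image Φx), score f y ψ x ε
      ≤ 1 - ψ ^ (x.length - m) := by
    have h1 : ∑ ε ∈ (Finset.univ \ Finset.univ.image Φx), score f y ψ x ε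
        ≤ ∑ ε ∈ (Finset.univ \ Finset.univ.image Φx), qdel ψ x ε :=
      Finset.sum_le_sum fun ε _ => hscore_le ψ hψmem ε
    have h2 := Finset.sum_sdiff (f := fun ε => qdel ψ x ε)
      (Finset.subset_univ (Finset.univ.image Φx))
    rw [hqdel_one ψ] at h2
    rw [himg_qdel'] at h2
    linarith
  have hx : W ≤ ∑ k ∈ Finset.range (m+1), (a k : ℝ) * (ψ ^ (x.length - k) * (1 - ψ) ^ k) := by
    rw [hW, hμ, smoothedProb, ← hgroupx]
    rw [← himg_score]
    linarith [hsum_sdiff, hcompl]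
  -- μ ≤ 1 and W ≤ 1
  have hμ1 : μ ≤ 1 := by
    rw [hμ, smoothedProb]
    calc ∑ ε : Fin x.length → Bool, score f y ψ x ε
        ≤ ∑ ε : Fin x.length → Bool, qdel ψ x ε :=
          Finset.sum_le_sum fun ε _ => hscore_le ψ hψmem ε
      _ = 1 := hqdel_one ψ
  have hψpow1 : ψ ^ (x.length - m) ≤ 1 := pow_le_one₀ hψ1.le hψ2.le
  have hW1 : W ≤ 1 := by rw [hW]; linarith
  -- H ≤ m
  have hHL : H ≤ m := by
    have hne : {h | h ≤ m ∧ W ≤ ∑ i ∈ Finset.range (h + 1), binomPMF m ψ i}.Nonempty := by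
      refine ⟨m, le_refl m, ?_⟩
      rw [binom_sum_one]
      exact hW1
    have := Nat.sInf_mem hne
    rw [← hH] at this
    exact this.1
  -- define τ
  set τ : ℕ → ℝ := fun k => ψ ^ (x.length - m) * ((a k : ℝ) / (m.choose k : ℝ)) with hτ
  have hτ0 : ∀ k, 0 ≤ τ k := by
    intro k
    rw [hτ]
    positivity
  have hτ1 : ∀ k, τ k ≤ 1 := by
    intro k
    rw [hτ]
    by_cases hk : k ≤ m
    · have hcp : (0:ℝ) < (m.choose k : ℝ) := by exact_mod_cast Nat.choose_pos hk
      have hak : (a k : ℝ) ≤ (m.choose k : ℝ) := by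
        exact_mod_cast count_le m k (fun T => f (applyDel zs T) = y)
      have hdiv : (a k : ℝ) / (m.choose k : ℝ) ≤ 1 := by
        rw [div_le_one hcp]; exact hak
      calc ψ ^ (x.length - m) * ((a k : ℝ) / (m.choose k : ℝ))
          ≤ 1 * 1 := by
            apply mul_le_mul hψpow1 hdiv (by positivity) (by norm_num)
        _ = 1 := by norm_num
    · have : m.choose k = 0 := Nat.choose_eq_zero_of_lt (by omega)
      simp [this]
  -- τ * binomPMF relation
  have hτB : ∀ k ∈ Finset.range (m+1),
      τ k * binomPMF m ψ k = (a k : ℝ) * (ψ ^ (x.length - k) * (1 - ψ) ^ k) := by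
    intro k hk
    rw [Finset.mem_range] at hk
    have hkm : k ≤ m := by omega
    have hcp : (0:ℝ) < (m.choose k : ℝ) := by exact_mod_cast Nat.choose_pos hkm
    rw [hτ]
    unfold binomPMF
    rw [show x.length - k = (x.length - m) + (m - k) by omega, pow_add]
    field_simp
  have hWτ : W ≤ ∑ k ∈ Finset.range (m+1), τ k * binomPMF m ψ k := by
    rw [Finset.sum_congr rfl hτB]
    exact hx
  -- apply lemD
  have hD := lemD m H hHL ψ ψt hψmem hψtmem hge τ hτ0 hτ1 W hWτ
  -- relate c * Σ τ B̃ to the xt grouped sum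
  have hψpow_pos : (0:ℝ) < ψ ^ (x.length - m) := by positivity
  have hψtpow_pos : (0:ℝ) < ψt ^ (xt.length - m) := by positivity
  set c : ℝ := ψt ^ (xt.length - m) / ψ ^ (x.length - m) with hc
  have hcpos : 0 < c := by rw [hc]; positivity
  have hcB : ∀ k ∈ Finset.range (m+1),
      c * (τ k * binomPMF m ψt k) = (a k : ℝ) * (ψt ^ (xt.length - k) * (1 - ψt) ^ k) := by
    intro k hk
    rw [Finset.mem_range] at hk
    have hkm : k ≤ m := by omega
    have hcp : (0:ℝ) < (m.choose k : ℝ) := by exact_mod_cast Nat.choose_pos hkm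
    rw [hc, hτ]
    unfold binomPMF
    rw [show xt.length - k = (xt.length - m) + (m - k) by omega, pow_add]
    field_simp
  have hfinal : c * ∑ k ∈ Finset.range (m+1), τ k * binomPMF m ψt k
      = ∑ k ∈ Finset.range (m+1), (a k : ℝ) * (ψt ^ (xt.length - k) * (1 - ψt) ^ k) := by
    rw [Finset.mul_sum]
    exact Finset.sum_congr rfl hcB
  have hmul := mul_le_mul_of_nonneg_left hD.le hcpos.le
  rw [ge_iff_le]
  calc c * (∑ i ∈ Finset.range H, binomPMF m ψt i +
        binomPMF m ψt H *
          gfloor ((W - ∑ j ∈ Finset.range H, binomPMF m ψ j) / binomPMF m ψ H)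
            ((m.choose H : ℝ)⁻¹))
      ≤ c * ∑ k ∈ Finset.range (m+1), τ k * binomPMF m ψt k := hmul
    _ = ∑ k ∈ Finset.range (m+1), (a k : ℝ) * (ψt ^ (xt.length - k) * (1 - ψt) ^ k) := hfinal
    _ ≤ smoothedProb f y ψt xt := hxt
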